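/- Let q ∈ ℂ with q^j ≠ 1 for all integers j ≥ 1 and let z ∈ ℂ with z ≠ 0. Then for every k, l ∈ {0,1}: (i) ∑_{i,j∈{0,1}} M(z)^{k,l}_{i,j} χ(z) = χ(z) in F̂; and (ii) ∑_{i,j∈{0,1}} (φ_{1/z} ∘ M(z)^{i,j}_{k,l}) = φ_{1/z} as linear functionals on F, where φ_w(|m⟩) = (q²)_m w^m/(q)_m with (q²)_m = ∏_{j=1}^m (1 − q^{2j}). -/

import Mathlib

open scoped TensorProduct
open scoped Classical

noncomputable section

/-- The Fock space: complex vector space with basis `{|m⟩ : m ∈ ℕ}`. -/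
abbrev FockSp : Type := ℕ →₀ ℂ

/-- basis vector `|m⟩` -/
def ket (m : ℕ) : FockSp := Finsupp.single m 1

/-- linear operator on the Fock space determined by its values on basis vectors -/
def opOfFun (g : ℕ → FockSp) : Module.End ℂ FockSp :=
  Finsupp.lsum ℂ fun m => LinearMap.toSpanSingleton ℂ FockSp (g m)

/-- `a⁺|m⟩ = |m+1⟩` -/
def aPlus : Module.End ℂ FockSp := opOfFun fun m => ket (m + 1)

/-- `a⁻|m⟩ = (1-q^{2m})|m-1⟩`; at `q = 0` this is `a⁻|m⟩ = |m-1⟩` with `|-1⟩ = 0` -/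
def aMinus (q : ℂ) : Module.End ℂ FockSp :=
  opOfFun fun m => (1 - q ^ (2 * m)) • ket (m - 1)

/-- `k|m⟩ = (-q)^m|m⟩`; at `q = 0` this is `k|m⟩ = δ_{m,0}|m⟩` -/
def kOp (q : ℂ) : Module.End ℂ FockSp := opOfFun fun m => (-q) ^ m • ket m

/-- `k̃|m⟩ = q^m|m⟩` -/
def ktOp (q : ℂ) : Module.End ℂ FockSp := opOfFun fun m => q ^ m • ket m

/-- numerical value of a `{0,1}`-valued edge variable (`false ↔ 0`, `true ↔ 1`) -/
def bv (b : Bool) : ℕ := cond b 1 0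

/-- The 3D `M` operator: `Mop q z a b i j` is `M(z)^{a,b}_{i,j}`. -/
def Mop (q z : ℂ) : Bool → Bool → Bool → Bool → Module.End ℂ FockSp
  | false, false, false, false => 1
  | true, true, true, true => 1
  | false, true, true, false => z • aPlus
  | true, false, false, true => z⁻¹ • aMinus q
  | false, true, false, true => ktOp q
  | true, false, true, false => (-q) • ktOp q
  | _, _, _, _ => 0

/-- the space `F̂` of formal sums `∑_{m≥0} c_m|m⟩`, represented by their coordinates -/
abbrev FHat : Type := ℕ → ℂ

/-- generic operator on `F̂` of the form `(c_m)_m ↦ (coef m · c_{idx m})_m` -/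
def genOpF (coef : ℕ → ℂ) (idx : ℕ → ℕ) : Module.End ℂ FHat where
  toFun c := fun m => coef m * c (idx m)
  map_add' a b := by funext m; simp [mul_add]
  map_smul' r a := by funext m; simp [smul_eq_mul]; ring

/-- componentwise extension of `a⁺` to `F̂`: `∑ c_m |m⟩ ↦ ∑ c_m |m+1⟩` -/
def aPlusF : Module.End ℂ FHat := genOpF (fun m => if m = 0 then 0 else 1) (fun m => m - 1)
/-- componentwise extension of `a⁻` to `F̂` -/
def aMinusF (q : ℂ) : Module.End ℂ FHat :=
  genOpF (fun m => 1 - q ^ (2 * (m + 1))) (fun m => m + 1)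
/-- componentwise extension of `k` to `F̂` -/
def kFh (q : ℂ) : Module.End ℂ FHat := genOpF (fun m => (-q) ^ m) id
/-- componentwise extension of `k̃` to `F̂` -/
def ktFh (q : ℂ) : Module.End ℂ FHat := genOpF (fun m => q ^ m) id

/-- the `M` operator extended componentwise to `F̂`: `MopF q z a b i j` is `M(z)^{a,b}_{i,j}` -/
def MopF (q z : ℂ) : Bool → Bool → Bool → Bool → Module.End ℂ FHat
  | false, false, false, false => 1
  | true, true, true, true => 1
  | false, true, true, false => z • aPlusF
  | true, false, false, true => z⁻¹ • aMinusF q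
  | false, true, false, true => ktFh q
  | true, false, true, false => (-q) • ktFh q
  | _, _, _, _ => 0

/-- `(q)_m = ∏_{j=1}^m (1 - q^j)` -/
def qPoch (q : ℂ) (m : ℕ) : ℂ := ∏ j ∈ Finset.range m, (1 - q ^ (j + 1))

/-- `χ(w) = ∑_{m≥0} (w^m/(q)_m)|m⟩ ∈ F̂` -/
def chiF (q w : ℂ) : FHat := fun m => w ^ m / qPoch q m

/-- `(q²)_m = ∏_{j=1}^m (1 - q^{2j})` -/
def qPoch2 (q : ℂ) (m : ℕ) : ℂ := ∏ j ∈ Finset.range m, (1 - q ^ (2 * (j + 1)))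

/-- linear functional on the Fock space determined by its values on basis vectors -/
def dualOf (g : ℕ → ℂ) : FockSp →ₗ[ℂ] ℂ :=
  Finsupp.lsum ℂ fun m => LinearMap.toSpanSingleton ℂ ℂ (g m)

/-- the functional `φ_w` with `φ_w(|m⟩) = (q²)_m w^m/(q)_m` -/
def phiW (q w : ℂ) : FockSp →ₗ[ℂ] ℂ := dualOf fun m => qPoch2 q m * w ^ m / qPoch q m

lemma qPoch_succ (q : ℂ) (m : ℕ) :
    qPoch q (m + 1) = qPoch q m * (1 - q ^ (m + 1)) := Finset.prod_range_succ _ _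

lemma qPoch2_succ (q : ℂ) (m : ℕ) :
    qPoch2 q (m + 1) = qPoch2 q m * (1 - q ^ (2 * (m + 1))) := Finset.prod_range_succ _ _

lemma qPoch_ne_zero (q : ℂ) (hq : ∀ j : ℕ, 1 ≤ j → q ^ j ≠ 1) (m : ℕ) :
    qPoch q m ≠ 0 := by
  apply Finset.prod_ne_zero_iff.2
  intro j _
  have := hq (j + 1) (Nat.le_add_left 1 j)
  intro h
  apply this
  linear_combination -h

lemma opOfFun_ket (g : ℕ → FockSp) (m : ℕ) : opOfFun g (ket m) = g m := by
  simp [opOfFun, ket]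

lemma dualOf_ket (g : ℕ → ℂ) (m : ℕ) : dualOf g (ket m) = g m := by
  simp [dualOf, ket]


lemma aPlusF_apply (c : FHat) (m : ℕ) :
    aPlusF c m = (if m = 0 then 0 else 1) * c (m - 1) := rfl

lemma aMinusF_apply (q : ℂ) (c : FHat) (m : ℕ) :
    aMinusF q c m = (1 - q ^ (2 * (m + 1))) * c (m + 1) := rfl

lemma ktFh_apply (q : ℂ) (c : FHat) (m : ℕ) : ktFh q c m = q ^ m * c m := rfl

/-- (i) `∑_{i,j} M(z)^{k,l}_{i,j} χ(z) = χ(z)` in `F̂`, and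
(ii) `∑_{i,j} φ_{1/z} ∘ M(z)^{i,j}_{k,l} = φ_{1/z}` as functionals on `F`. -/
theorem corollary_eigenvectors (q z : ℂ) (hq : ∀ j : ℕ, 1 ≤ j → q ^ j ≠ 1) (hz : z ≠ 0) :
    (∀ k l : Bool,
        (∑ i : Bool, ∑ j : Bool, MopF q z k l i j (chiF q z)) = chiF q z) ∧
    (∀ k l : Bool,
        (∑ i : Bool, ∑ j : Bool, phiW q z⁻¹ ∘ₗ Mop q z i j k l) = phiW q z⁻¹) := by
  have hP : ∀ m : ℕ, qPoch q m ≠ 0 := qPoch_ne_zero q hq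
  constructor
  · intro k l
    cases k <;> cases l
    · simp [Fintype.sum_bool, MopF]
    · -- k = false, l = true : z•a⁺ + k̃
      simp only [Fintype.sum_bool, MopF, LinearMap.add_apply, LinearMap.zero_apply,
        LinearMap.smul_apply, zero_add, add_zero]
      funext m
      simp only [Pi.add_apply, Pi.smul_apply, smul_eq_mul, aPlusF_apply, ktFh_apply, chiF]
      cases m with
      | zero => simp [qPoch]
      | succ n =>
        have h1 : qPoch q (n + 1) ≠ 0 := hP _
        have h0 : qPoch q n ≠ 0 := hP _
        rw [qPoch_succ] at h1 ⊢
        simp only [if_neg (Nat.succ_ne_zero n), Nat.add_sub_cancel]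
        have h2 : (1 : ℂ) - q ^ (n + 1) ≠ 0 := by
          intro h; exact hq (n + 1) (Nat.le_add_left 1 n) (by linear_combination -h)
        field_simp
        ring
    · -- k = true, l = false : z⁻¹•a⁻ + (-q)•k̃
      simp only [Fintype.sum_bool, MopF, LinearMap.add_apply, LinearMap.zero_apply,
        LinearMap.smul_apply, zero_add, add_zero]
      funext m
      simp only [Pi.add_apply, Pi.smul_apply, smul_eq_mul, aMinusF_apply, ktFh_apply, chiF]
      have h0 : qPoch q m ≠ 0 := hP _
      have h1 : qPoch q (m + 1) ≠ 0 := hP _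
      rw [qPoch_succ] at h1 ⊢
      have h2 : (1 : ℂ) - q ^ (m + 1) ≠ 0 := by
        intro h; exact hq (m + 1) (Nat.le_add_left 1 m) (by linear_combination -h)
      field_simp
      ring
    · simp [Fintype.sum_bool, MopF]
  · intro k l
    cases k <;> cases l
    · simp only [Fintype.sum_bool, Mop, LinearMap.comp_zero, zero_add, add_zero]
      exact LinearMap.ext fun x => rfl
    · -- (k,l) = (false,true) : z⁻¹•a⁻ and k̃
      simp only [Fintype.sum_bool, Mop, LinearMap.comp_zero, zero_add, add_zero]
      refine Finsupp.lhom_ext fun m c => ?_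
      have hm : (Finsupp.single m c : FockSp) = c • ket m := by
        simp [ket, Finsupp.smul_single]
      rw [hm]
      simp only [map_smul, LinearMap.add_apply, LinearMap.comp_apply, LinearMap.smul_apply,
        aMinus, ktOp, opOfFun_ket, map_smul, phiW, dualOf_ket, smul_eq_mul]
      congr 1
      cases m with
      | zero => simp [qPoch, qPoch2]
      | succ n =>
        have h0 : qPoch q n ≠ 0 := hP _
        have h2 : (1 : ℂ) - q ^ (n + 1) ≠ 0 := by
          intro h; exact hq (n + 1) (Nat.le_add_left 1 n) (by linear_combination -h)
        simp only [Nat.add_sub_cancel]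
        rw [qPoch_succ, qPoch2_succ, show 2 * (n + 1) = (n + 1) * 2 from Nat.mul_comm 2 (n + 1),
          pow_mul, pow_succ z⁻¹ n]
        set a := qPoch q n
        set b := qPoch2 q n
        set w := z⁻¹ ^ n
        set u := q ^ (n + 1)
        field_simp
        ring
    · -- (k,l) = (true,false) : z•a⁺ and (-q)•k̃
      simp only [Fintype.sum_bool, Mop, LinearMap.comp_zero, zero_add, add_zero]
      refine Finsupp.lhom_ext fun m c => ?_
      have hm : (Finsupp.single m c : FockSp) = c • ket m := by
        simp [ket, Finsupp.smul_single]
      rw [hm]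
      simp only [map_smul, LinearMap.add_apply, LinearMap.comp_apply, LinearMap.smul_apply,
        aPlus, ktOp, opOfFun_ket, map_smul, phiW, dualOf_ket, smul_eq_mul]
      congr 1
      have h0 : qPoch q m ≠ 0 := hP _
      have h2 : (1 : ℂ) - q ^ (m + 1) ≠ 0 := by
        intro h; exact hq (m + 1) (Nat.le_add_left 1 m) (by linear_combination -h)
      rw [qPoch_succ, qPoch2_succ]
      field_simp
      ring_nf
      simp only [mul_assoc, mul_inv_cancel₀ hz, mul_one]
      ring
    · simp only [Fintype.sum_bool, Mop, LinearMap.comp_zero, zero_add, add_zero]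
      exact LinearMap.ext fun x => rfl

end
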